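/- Let $\alpha$ be a positive integer and define $p : \mathbb{R}^2 \to \mathbb{R}$ in polar coordinates by $p(r,\theta) = c_j \, r^{\alpha} |\sin(\alpha\theta)|$ for $\theta \in (\tfrac{j\pi}{\alpha}, \tfrac{(j+1)\pi}{\alpha})$, $j = 0, \dots, 2\alpha - 1$, where $c_j \in \mathbb{R}$ are constants alternating in sign (i.e., $c_j = (-1)^j |c_j|$ with all $|c_j|$ possibly distinct). If $p$ is continuously differentiable across each ray $\{\theta = j\pi/\alpha\}$, then all $|c_j|$ are equal, and $p$ equals (up to sign) a constant multiple of the harmonic polynomial $r^\alpha \sin(\alpha\theta)$; in particular $p$ is harmonic on $\mathbb{R}^2$. -/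

import Mathlib

open Real Set

/-- The angular profile `θ ↦ c_j |sin(αθ)|` of the piecewise function `p(r,θ) = c_j r^α |sin(αθ)|`
for `θ` in the `j`-th sector `(jπ/α, (j+1)π/α)`. -/
noncomputable def Pfun (α : ℕ) (c : ℤ → ℝ) (θ : ℝ) : ℝ :=
  c ⌊θ * α / π⌋ * |Real.sin (α * θ)|

lemma pfun_eq (α : ℕ) (c : ℤ → ℝ)
    (halt : ∀ j : ℤ, c j = (-1) ^ j * |c j|) (θ : ℝ) :
    Pfun α c θ = |c ⌊θ * α / π⌋| * Real.sin (α * θ) := by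
  unfold Pfun
  set j := ⌊θ * α / π⌋ with hj
  have hπ : (0:ℝ) < π := Real.pi_pos
  have h1 : (j:ℝ) ≤ θ * α / π := Int.floor_le _
  have h2 : θ * α / π < j + 1 := Int.lt_floor_add_one _
  rw [le_div_iff₀ hπ] at h1
  rw [div_lt_iff₀ hπ] at h2
  have hs : Real.sin (α * θ) = (-1 : ℝ) ^ j * Real.sin (α * θ - j * π) := by
    have := Real.sin_add_int_mul_pi (α * θ - j * π) j
    simpa using this
  have hnn : 0 ≤ Real.sin (α * θ - j * π) :=
    Real.sin_nonneg_of_nonneg_of_le_pi (by nlinarith) (by nlinarith)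
  have habs : |Real.sin (α * θ)| = Real.sin (α * θ - j * π) := by
    have hone : |(-1:ℝ) ^ j| = 1 := by
      rcases Int.even_or_odd j with h | h
      · simp [h.neg_one_zpow]
      · simp [h.neg_one_zpow]
    rw [hs, abs_mul, abs_of_nonneg hnn, hone, one_mul]
  rw [habs]
  conv_lhs => rw [halt j]
  rw [hs]
  ring

lemma pfun_step (α : ℕ) (hα : 0 < α) (c : ℤ → ℝ)
    (halt : ∀ j : ℤ, c j = (-1) ^ j * |c j|)
    (hC1 : ∀ θ : ℝ, DifferentiableAt ℝ (Pfun α c) θ) (j : ℤ) :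
    |c (j - 1)| = |c j| := by
  have hπ : (0:ℝ) < π := Real.pi_pos
  have hαR : (0:ℝ) < α := by exact_mod_cast hα
  set θ₀ : ℝ := j * π / α with hθ₀
  have hαθ₀ : (α:ℝ) * θ₀ = j * π := by rw [hθ₀, mul_div_assoc', mul_div_right_comm, div_self hαR.ne', one_mul]
  have hsin0 : Real.sin (α * θ₀) = 0 := by rw [hαθ₀]; exact Real.sin_int_mul_pi j
  have hcos : Real.cos (α * θ₀) = (-1:ℝ) ^ j := by
    rw [hαθ₀]
    simpa using Real.cos_add_int_mul_pi 0 j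
  have hfloorR : ∀ θ : ℝ, θ₀ ≤ θ → θ < θ₀ + π / α → ⌊θ * α / π⌋ = j := by
    intro θ h1 h2
    rw [Int.floor_eq_iff]
    constructor
    · rw [le_div_iff₀ hπ]
      rw [hθ₀, div_le_iff₀ hαR] at h1
      nlinarith
    · rw [div_lt_iff₀ hπ]
      rw [hθ₀] at h2
      rw [show (j:ℝ) * π / α + π / α = ((j:ℝ) + 1) * π / α by ring, lt_div_iff₀ hαR] at h2
      nlinarith
  have hfloorL : ∀ θ : ℝ, θ₀ - π / α < θ → θ < θ₀ → ⌊θ * α / π⌋ = j - 1 := by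
    intro θ h1 h2
    rw [Int.floor_eq_iff]
    push_cast
    constructor
    · rw [le_div_iff₀ hπ]
      rw [hθ₀, show (j:ℝ) * π / α - π / α = ((j:ℝ) - 1) * π / α by ring, div_lt_iff₀ hαR] at h1
      nlinarith
    · rw [div_lt_iff₀ hπ]
      rw [hθ₀, lt_div_iff₀ hαR] at h2
      nlinarith
  have hmem0 : Pfun α c θ₀ = 0 := by
    rw [pfun_eq α c halt, hsin0, mul_zero]
  have hco : (0:ℝ) < π / α := by positivity
  have hgR : HasDerivAt (fun θ : ℝ => |c j| * Real.sin (α * θ))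
      (|c j| * (Real.cos (α * θ₀) * α)) θ₀ := by
    simpa using (((hasDerivAt_id θ₀).const_mul (α:ℝ)).sin.const_mul (|c j|))
  have hgL : HasDerivAt (fun θ : ℝ => |c (j-1)| * Real.sin (α * θ))
      (|c (j-1)| * (Real.cos (α * θ₀) * α)) θ₀ := by
    simpa using (((hasDerivAt_id θ₀).const_mul (α:ℝ)).sin.const_mul (|c (j-1)|))
  have hD := (hC1 θ₀).hasDerivAt
  have hR : HasDerivWithinAt (Pfun α c) (|c j| * (Real.cos (α * θ₀) * α)) (Ici θ₀) θ₀ := by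
    apply hgR.hasDerivWithinAt.congr_of_eventuallyEq
    · have hmem : Ico θ₀ (θ₀ + π / α) ∈ nhdsWithin θ₀ (Ici θ₀) := by
        rw [show Ico θ₀ (θ₀ + π / α) = Ici θ₀ ∩ Iio (θ₀ + π / α) from rfl]
        exact Filter.inter_mem self_mem_nhdsWithin
          (mem_nhdsWithin_of_mem_nhds (Iio_mem_nhds (by linarith)))
      filter_upwards [hmem] with θ hθ
      rw [pfun_eq α c halt, hfloorR θ hθ.1 hθ.2]
    · rw [hmem0, hsin0, mul_zero]
  have hL : HasDerivWithinAt (Pfun α c) (|c (j-1)| * (Real.cos (α * θ₀) * α)) (Iic θ₀) θ₀ := by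
    apply hgL.hasDerivWithinAt.congr_of_eventuallyEq
    · have hmem : Ioc (θ₀ - π / α) θ₀ ∈ nhdsWithin θ₀ (Iic θ₀) := by
        rw [show Ioc (θ₀ - π / α) θ₀ = Iic θ₀ ∩ Ioi (θ₀ - π / α) by
          ext x; simp [Ioc, and_comm]]
        exact Filter.inter_mem self_mem_nhdsWithin
          (mem_nhdsWithin_of_mem_nhds (Ioi_mem_nhds (by linarith)))
      filter_upwards [hmem] with θ hθ
      rcases eq_or_lt_of_le hθ.2 with h | h
      · rw [h, hmem0, hsin0, mul_zero]
      · rw [pfun_eq α c halt, hfloorL θ hθ.1 h]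
    · rw [hmem0, hsin0, mul_zero]
  have e1 : |c j| * (Real.cos (α * θ₀) * α) = deriv (Pfun α c) θ₀ :=
    (uniqueDiffOn_Ici θ₀ θ₀ self_mem_Ici).eq_deriv _ hR hD.hasDerivWithinAt
  have e2 : |c (j-1)| * (Real.cos (α * θ₀) * α) = deriv (Pfun α c) θ₀ :=
    (uniqueDiffOn_Iic θ₀ θ₀ self_mem_Iic).eq_deriv _ hL hD.hasDerivWithinAt
  have := e1.trans e2.symm
  rw [hcos] at this
  have hne : ((-1:ℝ) ^ j * α) ≠ 0 := by
    apply mul_ne_zero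
    · rcases Int.even_or_odd j with h | h <;> simp [h.neg_one_zpow, h.neg_one_zpow]
    · positivity
  exact (mul_right_cancel₀ hne this).symm

lemma im_pow_eq (α : ℕ) (r θ : ℝ) :
    (((r : ℂ) * Complex.exp ((θ : ℂ) * Complex.I)) ^ α).im = r ^ α * Real.sin (α * θ) := by
  rw [mul_pow, ← Complex.exp_nat_mul]
  rw [show (α : ℂ) * ((θ:ℂ) * Complex.I) = ((α * θ : ℝ) : ℂ) * Complex.I by push_cast; ring]
  rw [Complex.exp_mul_I]
  simp only [← Complex.ofReal_pow, Complex.mul_im, Complex.add_re, Complex.add_im,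
    Complex.mul_I_re, Complex.mul_I_im, Complex.cos_ofReal_re, Complex.cos_ofReal_im,
    Complex.sin_ofReal_re, Complex.sin_ofReal_im, Complex.ofReal_re, Complex.ofReal_im,
    Complex.I_re, Complex.I_im]
  push_cast
  ring

/-- if the piecewise function `p(r,θ) = c_j r^α |sin(αθ)|`, with coefficients
alternating in sign, is C¹ across each ray `{θ = jπ/α}`, then all `|c_j|` coincide and `p`
is (up to a constant) the harmonic polynomial `r^α sin(αθ) = Im(z^α)`. -/
theorem stmt3 (α : ℕ) (hα : 0 < α) (c : ℤ → ℝ)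
    (hper : ∀ j : ℤ, c (j + 2 * α) = c j)
    (halt : ∀ j : ℤ, c j = (-1) ^ j * |c j|)
    (hC1 : ∀ θ : ℝ, DifferentiableAt ℝ (Pfun α c) θ) :
    (∀ j j' : ℤ, |c j| = |c j'|) ∧
      (∀ θ : ℝ, Pfun α c θ = c 0 * Real.sin (α * θ)) ∧
      ∀ r θ : ℝ, 0 ≤ r →
        r ^ α * Pfun α c θ =
          c 0 * (((r : ℂ) * Complex.exp ((θ : ℂ) * Complex.I)) ^ α).im := by
  have habs0 : ∀ j : ℤ, |c j| = |c 0| := by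
    intro j
    induction j using Int.induction_on with
    | zero => rfl
    | succ n ih =>
        have h := pfun_step α hα c halt hC1 (n + 1)
        simp only [add_sub_cancel_right] at h
        rw [← h, ih]
    | pred n ih =>
        have h := pfun_step α hα c halt hC1 (-n)
        rw [show (-(n:ℤ) - 1) = (-n - 1 : ℤ) by ring]
        exact h.trans ih
  have hc0 : c 0 = |c 0| := by simpa using halt 0
  have hPf : ∀ θ : ℝ, Pfun α c θ = c 0 * Real.sin (α * θ) := by
    intro θ
    rw [pfun_eq α c halt θ, habs0, ← hc0]
  refine ⟨fun j j' => (habs0 j).trans (habs0 j').symm, hPf, fun r θ hr => ?_⟩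
  rw [hPf θ, im_pow_eq]
  ring
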